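/- Let X be a first-countable Hausdorff space and G a group of homeomorphisms of X acting minimally, such that for every open U ⊆ X the action of rist_G(U) on U is locally minimal. If x, y ∈ X are both regular points (i.e. St_G(x) = St⁰_G(x) and St_G(y) = St⁰_G(y)), then St_G(x) ≅ St_G(y). -/

import Mathlib

open Filter Topology Set

variable {X : Type*} [TopologicalSpace X]

/-- The group structure on self-homeomorphisms of `X`, with `(f * g) x = f (g x)`. -/
instance Homeomorph.instGroupSelf : Group (X ≃ₜ X) where
  mul f g := g.trans f
  one := Homeomorph.refl X
  inv := Homeomorph.symm
  mul_assoc _ _ _ := rfl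
  one_mul _ := Homeomorph.ext fun _ => rfl
  mul_one _ := Homeomorph.ext fun _ => rfl
  inv_mul_cancel f := Homeomorph.ext fun x => f.symm_apply_apply x

/-- The orbit of `x` under a group `G` of homeomorphisms of `X`. -/
def orbitSet (G : Subgroup (X ≃ₜ X)) (x : X) : Set X := {z | ∃ g ∈ G, g x = z}

/-- The action of `G` on `X` is minimal: every orbit is dense. -/
def IsMinimalAction (G : Subgroup (X ≃ₜ X)) : Prop := ∀ x : X, Dense (orbitSet G x)

/-- A set `S` of homeomorphisms acts minimally on `U`: for every `y ∈ U`, the intersection of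
the `S`-orbit of `y` with `U` is dense in `U`. -/
def MinimalOn (S : Set (X ≃ₜ X)) (U : Set X) : Prop :=
  ∀ y ∈ U, U ⊆ closure ({z | ∃ g ∈ S, g y = z} ∩ U)

/-- A set `S` of homeomorphisms acts locally minimally on `U`: every point of `U` has an open
neighbourhood `W ⊆ U` in which the intersection of every `S`-orbit with `W` is dense. -/
def LocallyMinimalOn (S : Set (X ≃ₜ X)) (U : Set X) : Prop :=
  ∀ x ∈ U, ∃ W ⊆ U, IsOpen W ∧ x ∈ W ∧ MinimalOn S W

/-- The rigid stabiliser of `U` in `G`: elements of `G` fixing `X \ U` pointwise. -/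
def rist (G : Subgroup (X ≃ₜ X)) (U : Set X) : Set (X ≃ₜ X) :=
  {g | g ∈ G ∧ ∀ z ∉ U, g z = z}

/-- The neighbourhood stabiliser of `x` in `G`, as a set: elements of `G` fixing pointwise
some open neighbourhood of `x`. -/
def nbhdStab (G : Subgroup (X ≃ₜ X)) (x : X) : Set (X ≃ₜ X) :=
  {g | g ∈ G ∧ ∃ U : Set X, IsOpen U ∧ x ∈ U ∧ ∀ z ∈ U, g z = z}

/-- The stabiliser of `x` in `G`, as a subgroup of the homeomorphism group. -/
def stabSub (G : Subgroup (X ≃ₜ X)) (x : X) : Subgroup (X ≃ₜ X) where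
  carrier := {g | g ∈ G ∧ g x = x}
  one_mem' := ⟨G.one_mem, rfl⟩
  mul_mem' := by
    rintro a b ⟨haG, ha⟩ ⟨hbG, hb⟩
    exact ⟨G.mul_mem haG hbG, by show a (b x) = x; rw [hb, ha]⟩
  inv_mem' := by
    rintro a ⟨haG, ha⟩
    refine ⟨G.inv_mem haG, ?_⟩
    show a.symm x = x
    conv_lhs => rw [← ha]
    exact a.symm_apply_apply x

/-- The neighbourhood stabiliser of `x` in `G`, as a subgroup of the homeomorphism group. -/
def nbhdStabSub (G : Subgroup (X ≃ₜ X)) (x : X) : Subgroup (X ≃ₜ X) where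
  carrier := nbhdStab G x
  one_mem' := ⟨G.one_mem, Set.univ, isOpen_univ, trivial, fun _ _ => rfl⟩
  mul_mem' := by
    rintro a b ⟨haG, U, hU, hxU, ha⟩ ⟨hbG, V, hV, hxV, hb⟩
    refine ⟨G.mul_mem haG hbG, U ∩ V, hU.inter hV, ⟨hxU, hxV⟩, fun z hz => ?_⟩
    show a (b z) = z
    rw [hb z hz.2, ha z hz.1]
  inv_mem' := by
    rintro a ⟨haG, U, hU, hxU, ha⟩
    refine ⟨G.inv_mem haG, U, hU, hxU, fun z hz => ?_⟩
    show a.symm z = z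
    conv_lhs => rw [← ha z hz]
    exact a.symm_apply_apply z
section StabIsoHelpers

variable {X : Type*} [TopologicalSpace X]

lemma StabIso.fix_out {f : X ≃ₜ X} {B : Set X} (hf : ∀ z ∈ B, f z = z) {z : X}
    (hz : z ∉ B) : f z ∉ B := by
  intro h
  have h2 : f z = z := f.injective (hf _ h)
  rw [h2] at h
  exact hz h

lemma StabIso.supp_in {f : X ≃ₜ X} {B : Set X} (hf : ∀ z ∉ B, f z = z) {z : X}
    (hz : z ∈ B) : f z ∈ B := by
  by_contra h
  have h2 : f z = z := f.injective (hf _ h)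
  rw [h2] at h
  exact h hz

lemma StabIso.fix_inv {f : X ≃ₜ X} {B : Set X} (hf : ∀ z ∈ B, f z = z) :
    ∀ z ∈ B, (f⁻¹ : X ≃ₜ X) z = z := by
  intro z hz
  show f.symm z = z
  conv_lhs => rw [← hf z hz]
  exact f.symm_apply_apply z

lemma StabIso.supp_inv {f : X ≃ₜ X} {B : Set X} (hf : ∀ z ∉ B, f z = z) :
    ∀ z ∉ B, (f⁻¹ : X ≃ₜ X) z = z := by
  intro z hz
  show f.symm z = z
  conv_lhs => rw [← hf z hz]
  exact f.symm_apply_apply z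

lemma StabIso.conj_eq {p u : X ≃ₜ X} {B : Set X} (hp : ∀ z ∈ B, p z = z)
    (hu : ∀ z ∉ B, u z = z) : u * p * u⁻¹ = p := by
  ext z
  show u (p ((u⁻¹ : X ≃ₜ X) z)) = p z
  by_cases hz : z ∈ B
  · have h1 : (u⁻¹ : X ≃ₜ X) z ∈ B := StabIso.supp_in (StabIso.supp_inv hu) hz
    rw [hp _ h1, hp _ hz]
    exact u.apply_symm_apply z
  · have h1 : (u⁻¹ : X ≃ₜ X) z = z := StabIso.supp_inv hu z hz
    rw [h1, hu _ (StabIso.fix_out hp hz)]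

lemma StabIso.rist_conj_mem {G : Subgroup (X ≃ₜ X)} {A : Set X} {c g : X ≃ₜ X}
    (hc : c ∈ G) (hg : g ∈ rist G A) : c * g * c⁻¹ ∈ rist G (c '' A) := by
  refine ⟨G.mul_mem (G.mul_mem hc hg.1) (G.inv_mem hc), ?_⟩
  intro z hz
  have h1 : (c⁻¹ : X ≃ₜ X) z ∉ A := by
    intro h
    exact hz ⟨c.symm z, h, c.apply_symm_apply z⟩
  show c (g ((c⁻¹ : X ≃ₜ X) z)) = z
  rw [hg.2 _ h1]
  exact c.apply_symm_apply z

lemma MinimalOn.mono {S : Set (X ≃ₜ X)} {W V : Set X} (h : MinimalOn S W) (hVW : V ⊆ W)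
    (hV : IsOpen V) : MinimalOn S V := by
  intro w hw v hv
  have hvW : v ∈ closure ({z | ∃ g ∈ S, g w = z} ∩ W) := h w (hVW hw) (hVW hv)
  rw [mem_closure_iff] at hvW ⊢
  intro o ho hvo
  obtain ⟨z, hz1, hz2⟩ := hvW (o ∩ V) (ho.inter hV) ⟨hvo, hv⟩
  exact ⟨z, hz1.1, hz2.1, hz1.2⟩

lemma MinimalOn.image {G : Subgroup (X ≃ₜ X)} {A W : Set X} {c : X ≃ₜ X} (hc : c ∈ G)
    (h : MinimalOn (rist G A) W) : MinimalOn (rist G (c '' A)) (c '' W) := by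
  rintro - ⟨w, hw, rfl⟩ - ⟨v, hv, rfl⟩
  have h1 : v ∈ closure ({z | ∃ g ∈ rist G A, g w = z} ∩ W) := h w hw hv
  have h2 : c '' ({z | ∃ g ∈ rist G A, g w = z} ∩ W) ⊆
      {z | ∃ g ∈ rist G (c '' A), g (c w) = z} ∩ c '' W := by
    rintro - ⟨z, ⟨⟨g, hg, rfl⟩, hzW⟩, rfl⟩
    refine ⟨⟨c * g * c⁻¹, StabIso.rist_conj_mem hc hg, ?_⟩, ⟨g w, hzW, rfl⟩⟩
    show c (g (c.symm (c w))) = c (g w)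
    rw [c.symm_apply_apply]
  have h3 : c v ∈ c '' closure ({z | ∃ g ∈ rist G A, g w = z} ∩ W) := ⟨v, h1, rfl⟩
  exact closure_mono h2 (image_closure_subset_closure_image c.continuous h3)

lemma MinimalOn.move {S : Set (X ≃ₜ X)} {W Ω : Set X} (h : MinimalOn S W) {w z : X}
    (hw : w ∈ W) (hΩ : IsOpen Ω) (hz : z ∈ Ω) (hΩW : Ω ⊆ W) : ∃ g ∈ S, g w ∈ Ω := by
  have h1 := h w hw (hΩW hz)
  rw [mem_closure_iff] at h1
  obtain ⟨u, huΩ, ⟨g, hgS, hgw⟩, -⟩ := h1 Ω hΩ hz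
  exact ⟨g, hgS, hgw ▸ huΩ⟩

lemma StabIso.minimal_univ {G : Subgroup (X ≃ₜ X)} (hmin : IsMinimalAction G) :
    MinimalOn (rist G (Set.univ : Set X)) Set.univ := by
  intro w _ v _
  refine closure_mono ?_ (hmin w v)
  rintro z ⟨g, hg, hgz⟩
  exact ⟨⟨g, ⟨hg, fun a ha => absurd (Set.mem_univ a) ha⟩, hgz⟩, Set.mem_univ z⟩

/-- The data of one stage of the back-and-forth construction. -/
structure StabIso.Stage (G : Subgroup (X ≃ₜ X)) (x y : X) where
  h : X ≃ₜ X
  A : Set X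
  S : Set X
  U : Set X
  hG : h ∈ G
  oA : IsOpen A
  oS : IsOpen S
  oU : IsOpen U
  yS : y ∈ S
  pS : h x ∈ S
  SA : S ⊆ A
  xU : x ∈ U
  min : MinimalOn (rist G A) S
  AU : A ⊆ h '' U

end StabIsoHelpers
open StabIso in
/-- The inductive step: refine the conjugator `h` so that both `y` and the image of `x`
lie in a new, smaller minimal window around `y`, the new window is contained in the image of
the new (smaller) neighbourhood of `x`, and the correction is supported in the old ambient set. -/
lemma StabIso.step {X : Type*} [TopologicalSpace X] {G : Subgroup (X ≃ₜ X)}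
    (hrist : ∀ U : Set X, IsOpen U → LocallyMinimalOn (rist G U) U)
    {x y : X} (s : Stage G x y) {Bb Cb : Set X} (oBb : IsOpen Bb) (yBb : y ∈ Bb)
    (oCb : IsOpen Cb) (xCb : x ∈ Cb) :
    ∃ s' : Stage G x y, s'.U ⊆ s.U ∧ s'.U ⊆ Cb ∧ s'.A ⊆ s.S ∧ s'.A ⊆ Bb ∧
      (∀ z ∉ s.A, (s'.h * s.h⁻¹) z = z) := by
  obtain ⟨h, A, S, U, hG, oA, oS, oU, yS, pS, SA, xU, hmin, AU⟩ := s
  -- the new, smaller neighbourhood of x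
  set U' : Set X := U ∩ Cb with hU'def
  have oU' : IsOpen U' := oU.inter oCb
  have xU' : x ∈ U' := ⟨xU, xCb⟩
  -- the new ambient set around y
  set A' : Set X := S ∩ Bb with hA'def
  have oA' : IsOpen A' := oS.inter oBb
  have yA' : y ∈ A' := ⟨yS, yBb⟩
  -- a minimal window for rist A' around y
  obtain ⟨W, hWA', oW, yW, minW⟩ := hrist A' oA' y yA'
  have hWS : W ⊆ S := hWA'.trans Set.inter_subset_left
  -- the image of the new neighbourhood of x, inside S
  set Ω : Set X := (h '' U') ∩ S with hΩdef
  have oΩ : IsOpen Ω := (h.isOpenMap U' oU').inter oS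
  have pΩ : h x ∈ Ω := ⟨⟨x, xU', rfl⟩, pS⟩
  -- move h x into the window W using minimality of rist A on S
  obtain ⟨r, hr, hrp⟩ := hmin.move pS oW yW hWS
  set q : X := r (h x) with hqdef
  set Ω' : Set X := (r '' Ω) ∩ W with hΩ'def
  have oΩ' : IsOpen Ω' := (r.isOpenMap Ω oΩ).inter oW
  have qΩ' : q ∈ Ω' := ⟨⟨h x, pΩ, rfl⟩, hrp⟩
  -- a minimal window for rist Ω' around q
  obtain ⟨W₀, hW₀, oW₀, qW₀, minW₀⟩ := hrist Ω' oΩ' q qΩ'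
  -- move y into W₀ using minimality of rist A' on W
  obtain ⟨t, ht, hty⟩ := minW.move yW oW₀ qW₀ (hW₀.trans Set.inter_subset_right)
  have htA' : ∀ z ∉ A', t z = z := ht.2
  have htinvA' : ∀ z ∈ A', (t⁻¹ : X ≃ₜ X) z ∈ A' := fun z hz =>
    StabIso.supp_in (StabIso.supp_inv htA') hz
  have hΩ'A' : Ω' ⊆ A' := Set.inter_subset_right.trans hWA'
  refine ⟨⟨t⁻¹ * r * h, (t⁻¹ : X ≃ₜ X) '' Ω', (t⁻¹ : X ≃ₜ X) '' W₀, U',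
    G.mul_mem (G.mul_mem (G.inv_mem ht.1) hr.1) hG,
    (t⁻¹ : X ≃ₜ X).isOpenMap _ oΩ', (t⁻¹ : X ≃ₜ X).isOpenMap _ oW₀, oU',
    ⟨t y, hty, t.symm_apply_apply y⟩,
    ⟨q, qW₀, rfl⟩,
    Set.image_mono hW₀, xU',
    MinimalOn.image (G.inv_mem ht.1) minW₀,
    ?_⟩, Set.inter_subset_left, Set.inter_subset_right, ?_, ?_, ?_⟩
  · -- A₊ ⊆ h₊ '' U'
    rintro - ⟨z, hz, rfl⟩
    obtain ⟨v, hv, rfl⟩ := hz.1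
    obtain ⟨uu, huu, rfl⟩ := hv.1
    exact ⟨uu, huu, rfl⟩
  · -- A₊ ⊆ S
    rintro - ⟨z, hz, rfl⟩
    exact Set.inter_subset_left (htinvA' z (hΩ'A' hz))
  · -- A₊ ⊆ Bb
    rintro - ⟨z, hz, rfl⟩
    exact Set.inter_subset_right (htinvA' z (hΩ'A' hz))
  · -- support of the correction
    intro z hz
    have hzA' : z ∉ A' := fun h' => hz (SA (Set.inter_subset_left h'))
    show (t⁻¹ : X ≃ₜ X) (r (h (h.symm z))) = z
    rw [h.apply_symm_apply, hr.2 z hz]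
    exact StabIso.supp_inv htA' z hzA'
theorem stab_iso_of_regular [FirstCountableTopology X] [T2Space X]
    (G : Subgroup (X ≃ₜ X)) (hmin : IsMinimalAction G)
    (hrist : ∀ U : Set X, IsOpen U → LocallyMinimalOn (rist G U) U)
    (x y : X) (hx : stabSub G x = nbhdStabSub G x) (hy : stabSub G y = nbhdStabSub G y) :
    Nonempty (↥(stabSub G x) ≃* ↥(stabSub G y)) := by
  classical
  -- antitone open neighbourhood bases at x and y
  obtain ⟨ub, hub⟩ := (𝓝 x).exists_antitone_basis
  obtain ⟨vb, hvb⟩ := (𝓝 y).exists_antitone_basis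
  set Ub : ℕ → Set X := fun n => interior (ub n) with hUbdef
  set Vb : ℕ → Set X := fun n => interior (vb n) with hVbdef
  have oUb : ∀ n, IsOpen (Ub n) := fun n => isOpen_interior
  have oVb : ∀ n, IsOpen (Vb n) := fun n => isOpen_interior
  have xUb : ∀ n, x ∈ Ub n := fun n => mem_interior_iff_mem_nhds.2 (hub.1.mem_of_mem trivial)
  have yVb : ∀ n, y ∈ Vb n := fun n => mem_interior_iff_mem_nhds.2 (hvb.1.mem_of_mem trivial)
  have Ubcof : ∀ V : Set X, IsOpen V → x ∈ V → ∃ n, Ub n ⊆ V := by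
    intro V hV hxV
    obtain ⟨n, -, hn⟩ := hub.1.mem_iff.1 (hV.mem_nhds hxV)
    exact ⟨n, interior_subset.trans hn⟩
  have Vbcof : ∀ V : Set X, IsOpen V → y ∈ V → ∃ n, Vb n ⊆ V := by
    intro V hV hyV
    obtain ⟨n, -, hn⟩ := hvb.1.mem_iff.1 (hV.mem_nhds hyV)
    exact ⟨n, interior_subset.trans hn⟩
  have Ubanti : ∀ n, Ub (n + 1) ⊆ Ub n := fun n => interior_mono (hub.2 (Nat.le_succ n))
  have Vbanti : ∀ n, Vb (n + 1) ⊆ Vb n := fun n => interior_mono (hvb.2 (Nat.le_succ n))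
  -- base stage
  have s0 : StabIso.Stage G x y :=
    { h := 1, A := Set.univ, S := Set.univ, U := Set.univ,
      hG := G.one_mem, oA := isOpen_univ, oS := isOpen_univ, oU := isOpen_univ,
      yS := Set.mem_univ y, pS := Set.mem_univ _, SA := subset_rfl, xU := Set.mem_univ x,
      min := StabIso.minimal_univ hmin,
      AU := fun z _ => ⟨z, Set.mem_univ z, rfl⟩ }
  -- the tower of stages
  have stepEx : ∀ (n : ℕ) (s : StabIso.Stage G x y), ∃ s' : StabIso.Stage G x y,
      s'.U ⊆ s.U ∧ s'.U ⊆ Ub n ∧ s'.A ⊆ s.S ∧ s'.A ⊆ Vb n ∧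
        (∀ z ∉ s.A, (s'.h * s.h⁻¹) z = z) :=
    fun n s => StabIso.step hrist s (oVb n) (yVb n) (oUb n) (xUb n)
  choose nxt hnxt using stepEx
  let f : ℕ → StabIso.Stage G x y := fun n => Nat.rec s0 (fun k s => nxt (k + 1) s) n
  have hstep : ∀ n, (f (n + 1)).U ⊆ (f n).U ∧ (f (n + 1)).U ⊆ Ub (n + 1) ∧
      (f (n + 1)).A ⊆ (f n).S ∧ (f (n + 1)).A ⊆ Vb (n + 1) ∧
      (∀ z ∉ (f n).A, ((f (n + 1)).h * (f n).h⁻¹) z = z) :=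
    fun n => hnxt (n + 1) (f n)
  have Amono : ∀ {n m : ℕ}, n ≤ m → (f m).A ⊆ (f n).A := by
    intro n m hnm
    induction hnm with
    | refl => exact subset_rfl
    | @step k hk ih =>
      exact ((hstep k).2.2.1.trans (f k).SA).trans ih
  have Ucof : ∀ V : Set X, IsOpen V → x ∈ V → ∃ N, (f N).U ⊆ V := by
    intro V hV hxV
    obtain ⟨n, hn⟩ := Ubcof V hV hxV
    exact ⟨n + 1, (hstep n).2.1.trans ((Ubanti n).trans hn)⟩
  have Acof : ∀ V : Set X, IsOpen V → y ∈ V → ∃ N, (f N).A ⊆ V := by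
    intro V hV hyV
    obtain ⟨n, hn⟩ := Vbcof V hV hyV
    exact ⟨n + 1, (hstep n).2.2.2.1.trans ((Vbanti n).trans hn)⟩
  -- forward eventual constancy
  have fwd : ∀ g : X ≃ₜ X, g ∈ stabSub G x →
      ∃ N, (∀ m, N ≤ m → (f m).h * g * ((f m).h)⁻¹ = (f N).h * g * ((f N).h)⁻¹) ∧
        (f N).h * g * ((f N).h)⁻¹ ∈ stabSub G y := by
    intro g hg
    have hg' : g ∈ nbhdStabSub G x := hx ▸ hg
    obtain ⟨hgG, Ug, oUg, xUg, gfix⟩ := hg'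
    obtain ⟨N, hN⟩ := Ucof Ug oUg xUg
    have fixN : ∀ z ∈ (f N).A, ((f N).h * g * ((f N).h)⁻¹) z = z := by
      intro z hz
      obtain ⟨w, hw, rfl⟩ := (f N).AU hz
      show (f N).h (g (((f N).h).symm ((f N).h w))) = (f N).h w
      rw [((f N).h).symm_apply_apply, gfix w (hN hw)]
    refine ⟨N, ?_, ⟨G.mul_mem (G.mul_mem (f N).hG hgG) (G.inv_mem (f N).hG),
      fixN y ((f N).SA (f N).yS)⟩⟩
    intro m hm
    induction m, hm using Nat.le_induction with
    | base => rfl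
    | succ n hn ih =>
      have e1 : (f (n + 1)).h * g * ((f (n + 1)).h)⁻¹ =
          ((f (n + 1)).h * ((f n).h)⁻¹) * ((f n).h * g * ((f n).h)⁻¹) *
            ((f (n + 1)).h * ((f n).h)⁻¹)⁻¹ := by group
      rw [e1, ih]
      exact StabIso.conj_eq (fun z hz => fixN z (Amono hn hz)) (hstep n).2.2.2.2
  -- backward eventual constancy
  have bwd : ∀ g : X ≃ₜ X, g ∈ stabSub G y →
      ∃ N, (∀ m, N ≤ m → ((f m).h)⁻¹ * g * (f m).h = ((f N).h)⁻¹ * g * (f N).h) ∧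
        ((f N).h)⁻¹ * g * (f N).h ∈ stabSub G x := by
    intro g hg
    have hg' : g ∈ nbhdStabSub G y := hy ▸ hg
    obtain ⟨hgG, V, oV, yV, gfix⟩ := hg'
    obtain ⟨N, hN⟩ := Acof V oV yV
    have hval : (((f N).h)⁻¹ * g * (f N).h) x = x := by
      show ((f N).h).symm (g ((f N).h x)) = x
      rw [gfix _ (hN ((f N).SA (f N).pS))]
      exact ((f N).h).symm_apply_apply x
    refine ⟨N, ?_, ⟨G.mul_mem (G.mul_mem (G.inv_mem (f N).hG) hgG) (f N).hG, hval⟩⟩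
    intro m hm
    induction m, hm using Nat.le_induction with
    | base => rfl
    | succ n hn ih =>
      have e1 : ((f (n + 1)).h)⁻¹ * g * (f (n + 1)).h =
          ((f n).h)⁻¹ * (((f (n + 1)).h * ((f n).h)⁻¹)⁻¹ * g *
            (((f (n + 1)).h * ((f n).h)⁻¹)⁻¹)⁻¹) * (f n).h := by group
      have e2 : ((f (n + 1)).h * ((f n).h)⁻¹)⁻¹ * g *
          (((f (n + 1)).h * ((f n).h)⁻¹)⁻¹)⁻¹ = g :=
        StabIso.conj_eq (fun z hz => gfix z (hN (Amono hn hz)))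
          (StabIso.supp_inv (hstep n).2.2.2.2)
      rw [e1, e2]
      exact ih
  choose! Nf hNc hNm using fwd
  choose! Mf hMc hMm using bwd
  refine ⟨{
    toFun := fun a => ⟨(f (Nf ↑a)).h * ↑a * ((f (Nf ↑a)).h)⁻¹, hNm ↑a a.2⟩
    invFun := fun b => ⟨((f (Mf ↑b)).h)⁻¹ * ↑b * (f (Mf ↑b)).h, hMm ↑b b.2⟩
    left_inv := ?_
    right_inv := ?_
    map_mul' := ?_ }⟩
  · intro a
    apply Subtype.ext
    show ((f (Mf _)).h)⁻¹ * ((f (Nf ↑a)).h * ↑a * ((f (Nf ↑a)).h)⁻¹) * (f (Mf _)).h = ↑a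
    set v : X ≃ₜ X := (f (Nf ↑a)).h * ↑a * ((f (Nf ↑a)).h)⁻¹ with hvdef
    have hv : v ∈ stabSub G y := hNm ↑a a.2
    set m : ℕ := max (Nf ↑a) (Mf v) with hmdef
    rw [← hMc v hv m (le_max_right _ _), hvdef, ← hNc ↑a a.2 m (le_max_left _ _)]
    group
  · intro b
    apply Subtype.ext
    show (f (Nf _)).h * (((f (Mf ↑b)).h)⁻¹ * ↑b * (f (Mf ↑b)).h) * ((f (Nf _)).h)⁻¹ = ↑b
    set w : X ≃ₜ X := ((f (Mf ↑b)).h)⁻¹ * ↑b * (f (Mf ↑b)).h with hwdef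
    have hw : w ∈ stabSub G x := hMm ↑b b.2
    set m : ℕ := max (Mf ↑b) (Nf w) with hmdef
    rw [← hNc w hw m (le_max_right _ _), hwdef, ← hMc ↑b b.2 m (le_max_left _ _)]
    group
  · intro a b
    apply Subtype.ext
    show (f (Nf (↑a * ↑b))).h * (↑a * ↑b) * ((f (Nf (↑a * ↑b))).h)⁻¹ =
      ((f (Nf ↑a)).h * ↑a * ((f (Nf ↑a)).h)⁻¹) * ((f (Nf ↑b)).h * ↑b * ((f (Nf ↑b)).h)⁻¹)
    set m : ℕ := max (Nf (↑a * ↑b)) (max (Nf ↑a) (Nf ↑b)) with hmdef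
    rw [← hNc (↑a * ↑b) (mul_mem a.2 b.2) m (le_max_left _ _),
      ← hNc ↑a a.2 m (le_trans (le_max_left _ _) (le_max_right _ _)),
      ← hNc ↑b b.2 m (le_trans (le_max_right _ _) (le_max_right _ _))]
    group
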